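/- Let m be an odd positive integer and let G ⊆ ℚ² be the subgroup generated by g₁ = (1,0), g₂ = (0,1), (g₁+g₂)/2, g₁/p for each prime p in a finite set S of odd primes with product m, and g₂/p^k for every prime p ∉ S ∪ {2} and all k ≥ 1. Then G = A ⊕ B where A is the pure subgroup generated by a = (g₁ + m·g₂)/2 and B is the pure subgroup generated by g₂. -/

import Mathlib

/-- The group of Lemma 5.3, for a finite set `S` of odd primes. -/
def lemmaGroup (S : Finset ℕ) : AddSubgroup (ℚ × ℚ) :=
  AddSubgroup.closure
    ({((1 : ℚ), (0 : ℚ)), ((0 : ℚ), (1 : ℚ)), ((1/2 : ℚ), (1/2 : ℚ))} ∪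
      {x | ∃ p ∈ S, x = ((1 / (p : ℚ)), (0 : ℚ))} ∪
      {x | ∃ p : ℕ, p.Prime ∧ p ∉ S ∧ p ≠ 2 ∧
        ∃ k : ℕ, 1 ≤ k ∧ x = ((0 : ℚ), (1 / (p : ℚ) ^ k))})

/-- Membership in the pure subgroup of `lemmaGroup S` generated by `v`. -/
def inPureGenBy (S : Finset ℕ) (v g : ℚ × ℚ) : Prop :=
  g ∈ lemmaGroup S ∧ ∃ n : ℕ, 1 ≤ n ∧ ∃ z : ℤ, (n : ℤ) • g = z • v

theorem lemma53_decomposition (S : Finset ℕ)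
    (hS : ∀ p ∈ S, Nat.Prime p ∧ Odd p) :
    (∀ g ∈ lemmaGroup S,
      ∃ a b : ℚ × ℚ,
        inPureGenBy S ((1/2 : ℚ), ((∏ p ∈ S, p : ℕ) / 2 : ℚ)) a ∧
        inPureGenBy S ((0 : ℚ), (1 : ℚ)) b ∧ g = a + b) ∧
    (∀ g : ℚ × ℚ, inPureGenBy S ((1/2 : ℚ), ((∏ p ∈ S, p : ℕ) / 2 : ℚ)) g →
      inPureGenBy S ((0 : ℚ), (1 : ℚ)) g → g = 0) := by
  set M : ℕ := ∏ p ∈ S, p with hM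
  have hModd : Odd M := by
    refine Finset.prod_induction _ Odd (fun a b => Odd.mul) odd_one (fun p hp => (hS p hp).2)
  have hg2 : ((0:ℚ), (1:ℚ)) ∈ lemmaGroup S := by
    apply AddSubgroup.subset_closure
    left; left; right; left; rfl
  have key : ∀ g ∈ lemmaGroup S, ((g.1, (M:ℚ) * g.1) : ℚ × ℚ) ∈ lemmaGroup S := by
    intro g hg
    induction hg using AddSubgroup.closure_induction with
    | mem x hx =>
      rcases hx with (h | ⟨p, hp, rfl⟩) | ⟨p, hpp, hpS, hp2, k, hk, rfl⟩
      · rcases h with h | h | h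
        · subst h
          have : (((1:ℚ),(0:ℚ)).1, (M:ℚ) * ((1:ℚ),(0:ℚ)).1) =
              ((1:ℚ),(0:ℚ)) + (M:ℤ) • ((0:ℚ),(1:ℚ)) := by
            simp [Prod.ext_iff]
          rw [this]
          exact AddSubgroup.add_mem _ (AddSubgroup.subset_closure (by left; left; left; rfl))
            (AddSubgroup.zsmul_mem _ hg2 _)
        · subst h; simp; exact AddSubgroup.zero_mem _
        · subst h
          obtain ⟨t, ht⟩ := hModd
          have : (((1/2:ℚ),(1/2:ℚ)).1, (M:ℚ) * ((1/2:ℚ),(1/2:ℚ)).1) =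
              ((1/2:ℚ),(1/2:ℚ)) + (t:ℤ) • ((0:ℚ),(1:ℚ)) := by
            simp only [Prod.ext_iff, Prod.smul_mk, Prod.mk_add_mk, zsmul_eq_mul]
            constructor
            · push_cast; ring
            · have : (M:ℚ) = 2*t+1 := by exact_mod_cast congrArg Nat.cast ht
              rw [this]; push_cast; ring
          rw [this]
          exact AddSubgroup.add_mem _ (AddSubgroup.subset_closure (by left; left; right; right; rfl))
            (AddSubgroup.zsmul_mem _ hg2 _)
      · -- (1/p, 0) with p ∈ S
        obtain ⟨q, hq⟩ : p ∣ M := Finset.dvd_prod_of_mem _ hp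
        have hp0 : (p:ℚ) ≠ 0 := by
          exact_mod_cast (hS p hp).1.ne_zero
        have : ((M:ℚ) * (1/(p:ℚ))) = (q:ℚ) := by
          rw [hq]; push_cast; field_simp
        have heq : (((1/(p:ℚ)),(0:ℚ)).1, (M:ℚ) * ((1/(p:ℚ)),(0:ℚ)).1) =
            ((1/(p:ℚ)),(0:ℚ)) + (q:ℤ) • ((0:ℚ),(1:ℚ)) := by
          simp only [Prod.ext_iff, Prod.mk_add_mk, Prod.smul_mk, zsmul_eq_mul,
            mul_zero, mul_one, add_zero, zero_add]
          exact ⟨trivial, this⟩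
        rw [heq]
        refine AddSubgroup.add_mem _ (AddSubgroup.subset_closure ?_)
          (AddSubgroup.zsmul_mem _ hg2 _)
        left; right; exact ⟨p, hp, rfl⟩
      · simp; exact AddSubgroup.zero_mem _
    | zero => simp; exact AddSubgroup.zero_mem _
    | add x y hx hy ihx ihy =>
      have : ((x+y).1, (M:ℚ) * (x+y).1) = (x.1, (M:ℚ)*x.1) + (y.1, (M:ℚ)*y.1) := by
        simp [Prod.ext_iff]; ring
      rw [this]; exact AddSubgroup.add_mem _ ihx ihy
    | neg x hx ihx =>
      have : ((-x).1, (M:ℚ) * (-x).1) = -(x.1, (M:ℚ)*x.1) := by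
        simp [Prod.ext_iff]
      rw [this]; exact AddSubgroup.neg_mem _ ihx
  constructor
  · intro g hg
    refine ⟨(g.1, (M:ℚ)*g.1), (0, g.2 - (M:ℚ)*g.1), ?_, ?_, ?_⟩
    · refine ⟨key g hg, (2*g.1).den, (2*g.1).den_pos, (2*g.1).num, ?_⟩
      have hden : ((2*g.1).den : ℚ) * (2*g.1) = ((2*g.1).num : ℚ) := by
        rw [mul_comm]; exact_mod_cast Rat.mul_den_eq_num _
      simp only [Prod.smul_mk, zsmul_eq_mul, Prod.ext_iff]
      constructor
      · have := hden; push_cast at this ⊢; linarith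
      · have := hden; push_cast at this ⊢; nlinarith [this]
    · refine ⟨?_, (g.2 - (M:ℚ)*g.1).den, (g.2 - (M:ℚ)*g.1).den_pos,
        (g.2 - (M:ℚ)*g.1).num, ?_⟩
      · have : ((0:ℚ), g.2 - (M:ℚ)*g.1) = g - (g.1, (M:ℚ)*g.1) := by
          simp [Prod.ext_iff]
        rw [this]; exact AddSubgroup.sub_mem _ hg (key g hg)
      · set w := g.2 - (M:ℚ)*g.1 with hw
        have hden : (w.den : ℚ) * w = (w.num : ℚ) := by
          rw [mul_comm]; exact_mod_cast Rat.mul_den_eq_num _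
        simp only [Prod.smul_mk, zsmul_eq_mul, Prod.ext_iff]
        constructor
        · simp
        · push_cast at hden ⊢; linarith
    · simp [Prod.ext_iff]
  · rintro g ⟨-, n1, hn1, z1, h1⟩ ⟨-, n2, hn2, z2, h2⟩
    have e2 : (n2:ℚ) * g.1 = 0 := by
      have := congrArg Prod.fst h2
      simpa using this
    have hg1 : g.1 = 0 := by
      have hn2' : (n2:ℚ) ≠ 0 := by positivity
      exact (mul_eq_zero.mp e2).resolve_left hn2'
    have e1 : (n1:ℚ) * g.1 = (z1:ℚ) * (1/2) := by
      have := congrArg Prod.fst h1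
      simpa using this
    have hz1 : (z1:ℚ) = 0 := by
      rw [hg1] at e1; field_simp at e1; linarith [e1]
    have e1' : (n1:ℚ) * g.2 = (z1:ℚ) * ((M:ℚ)/2) := by
      have := congrArg Prod.snd h1
      simpa using this
    have hg2' : g.2 = 0 := by
      rw [hz1] at e1'
      have hn1' : (n1:ℚ) ≠ 0 := by positivity
      simpa [hn1'] using e1'
    exact Prod.ext hg1 hg2'
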